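/- In the free associative unital 𝔽₂-algebra F on generators λ_0, λ_1, λ_2, …, the two-sided ideal generated by the symmetric Adem relations Σ_{i+j=n, i,j ≥ 0} C(i+j, i)·λ_{i−1+m}·λ_{j−1+2m} (one for each m ≥ 1 and n ≥ 0) is equal to the two-sided ideal generated by the admissible Adem relations λ_i·λ_{2i+1+n} + Σ_{j ≥ 0} C(n−j−1, j)·λ_{i+n−j}·λ_{2i+1+j} (one for each i ≥ 0 and n ≥ 0). -/

import Mathlib

noncomputable section

open Finset

/-- The ground field 𝔽₂. -/
abbrev K2 : Type := ZMod 2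

/-- The free associative unital 𝔽₂-algebra on generators λ₀, λ₁, λ₂, …. -/
abbrev FA : Type := FreeAlgebra K2 ℕ

/-- The generator λₙ of the free algebra. -/
def lamF (n : ℕ) : FA := FreeAlgebra.ι K2 n

/-- The symmetric Adem relation `Σ_{i+j=n} C(i+j,i) λ_{i-1+m'} λ_{j-1+2m'}`, where the
parameter `m : ℕ` encodes the actual index `m' = m + 1 ≥ 1` (so all subscripts are
genuine natural numbers, and every `m' ≥ 1`, `n ≥ 0` occurs). -/
def symRel (m n : ℕ) : FA :=
  ∑ i ∈ Finset.range (n + 1),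
    (Nat.choose n i : K2) • (lamF (i + m) * lamF (n - i + 2 * m + 1))

/-- The admissible Adem relation
`λ_i λ_{2i+1+n} + Σ_{j ≥ 0} C(n-j-1, j) λ_{i+n-j} λ_{2i+1+j}` for `i, n ≥ 0`.
Since `C(n-j-1, j) = 0` (with the convention that `C(a,b) = 0` unless `0 ≤ b ≤ a`)
whenever `j ≥ n`, the sum may be taken over `0 ≤ j < n`, where all the subscripts and
binomial arguments are genuine natural numbers. -/
def admRel (i n : ℕ) : FA :=
  lamF i * lamF (2 * i + 1 + n) +
    ∑ j ∈ Finset.range n,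
      (Nat.choose (n - j - 1) j : K2) • (lamF (i + n - j) * lamF (2 * i + 1 + j))

abbrev P2 : Type := MvPolynomial (Fin 2) K2
def xP : P2 := MvPolynomial.X 0
def yP : P2 := MvPolynomial.X 1

def Phi : P2 →ₗ[K2] FA :=
  (Finsupp.linearCombination K2 fun d : Fin 2 →₀ ℕ => lamF (d 0) * lamF (d 1)) ∘ₗ
    (AddMonoidAlgebra.coeffLinearEquiv K2).toLinearMap

lemma Phi_monomial (d : Fin 2 →₀ ℕ) (c : K2) :
    Phi (MvPolynomial.monomial d c) = c • (lamF (d 0) * lamF (d 1)) := by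
  rw [← MvPolynomial.single_eq_monomial]
  exact Finsupp.linearCombination_single K2 (v := fun d : Fin 2 →₀ ℕ => lamF (d 0) * lamF (d 1)) c d

lemma Phi_xy (a b : ℕ) : Phi (xP ^ a * yP ^ b) = lamF a * lamF b := by
  have hd : ∀ i : Fin 2, (Finsupp.single (0 : Fin 2) a + Finsupp.single (1 : Fin 2) b) i
      = if i = 0 then a else b := by
    intro i
    fin_cases i <;> simp [Finsupp.single_apply]
  rw [xP, yP, MvPolynomial.X_pow_eq_monomial, MvPolynomial.X_pow_eq_monomial,
    MvPolynomial.monomial_mul, Phi_monomial, hd 0, hd 1]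
  norm_num

def uP : P2 := xP + yP
def vP : P2 := xP * yP ^ 2
def gP (n : ℕ) : P2 :=
  yP ^ n + ∑ j ∈ Finset.range n, ((n - j - 1).choose j : K2) • (xP ^ (n - j) * yP ^ j)

lemma natCast_P2 (k : ℕ) : ((k : P2)) = MvPolynomial.C ((k : K2)) := by
  rw [map_natCast]

lemma symRel_Phi (m n : ℕ) : symRel m n = Phi (uP ^ n * (xP ^ m * yP ^ (2 * m + 1))) := by
  rw [uP, add_pow, Finset.sum_mul, map_sum, symRel]
  refine Finset.sum_congr rfl fun i hi => ?_
  have h1 : xP ^ i * yP ^ (n - i) * (n.choose i : P2) * (xP ^ m * yP ^ (2 * m + 1))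
      = (n.choose i : K2) • (xP ^ (i + m) * yP ^ (n - i + 2 * m + 1)) := by
    rw [natCast_P2, MvPolynomial.smul_eq_C_mul, pow_add, pow_add]
    ring
  rw [h1, map_smul, Phi_xy]

lemma admRel_Phi (i n : ℕ) : admRel i n = Phi (gP n * (xP ^ i * yP ^ (2 * i + 1))) := by
  rw [gP, add_mul, Finset.sum_mul, map_add, map_sum, admRel]
  congr 1
  · have h1 : yP ^ n * (xP ^ i * yP ^ (2 * i + 1)) = xP ^ i * yP ^ (2 * i + 1 + n) := by
      rw [pow_add]; ring
    rw [h1, Phi_xy]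
  · refine Finset.sum_congr rfl fun j hj => ?_
    have hj' : j < n := Finset.mem_range.mp hj
    have h1 : ((n - j - 1).choose j : K2) • (xP ^ (n - j) * yP ^ j) * (xP ^ i * yP ^ (2 * i + 1))
        = ((n - j - 1).choose j : K2) • (xP ^ (i + n - j) * yP ^ (2 * i + 1 + j)) := by
      rw [smul_mul_assoc]
      congr 1
      rw [show i + n - j = (n - j) + i by omega, pow_add, pow_add]
      ring
    rw [h1, map_smul, Phi_xy]

lemma h2K : (2 : K2) = 0 := by decide

lemma h2P : (2 : P2) = 0 := by
  have : ((2 : ℕ) : P2) = MvPolynomial.C ((2 : ℕ) : K2) := natCast_P2 2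
  simpa [h2K] using this

lemma chooseK2_zero (a k : ℕ) (h : a < 3 * k) : ((a - 2 * k).choose k : K2) = 0 := by
  rw [Nat.choose_eq_zero_of_lt (by omega)]
  norm_num

lemma key2 (p k : ℕ) :
    ((p + 1 - 2 * k).choose (k + 1) : K2)
      = ((p - 2 * k).choose (k + 1) : K2) + ((p - 2 * k).choose k : K2) := by
  by_cases h : 2 * k ≤ p
  · rw [show p + 1 - 2 * k = (p - 2 * k) + 1 by omega, Nat.choose_succ_succ]
    push_cast
    ring
  · have hk : 1 ≤ k := by omega
    rw [show p + 1 - 2 * k = 0 by omega, show p - 2 * k = 0 by omega,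
      Nat.choose_eq_zero_of_lt (show 0 < k + 1 by omega),
      Nat.choose_eq_zero_of_lt (show 0 < k by omega)]
    norm_num

lemma key1 (n j : ℕ) (hn : 1 ≤ n) :
    ((n - j).choose (j + 2) : K2)
      = ((n - j - 1).choose (j + 2) : K2) + ((n - j).choose (j + 1) : K2)
        + ((n - j - 1).choose j : K2) := by
  by_cases hj : j + 1 ≤ n
  · rw [show n - j = (n - j - 1) + 1 by omega]
    rw [show (n - j - 1) + 1 - 1 = n - j - 1 by omega]
    rw [Nat.choose_succ_succ _ (j + 1), Nat.choose_succ_succ _ j]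
    push_cast
    linear_combination (-((n - j - 1).choose j : K2)) * h2K
  · rw [show n - j - 1 = 0 by omega, show n - j = 0 by omega,
      Nat.choose_eq_zero_of_lt (by omega : 0 < j + 2),
      Nat.choose_eq_zero_of_lt (by omega : 0 < j + 1),
      Nat.choose_eq_zero_of_lt (by omega : 0 < j)]
    norm_num

lemma gP_zero : gP 0 = 1 := by simp [gP]
lemma gP_one : gP 1 = uP := by
  simp [gP, uP, Finset.sum_range_succ]
  ring
lemma gP_two : gP 2 = uP ^ 2 := by
  simp [gP, uP, Finset.sum_range_succ]
  ring_nf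
  linear_combination (-(xP * yP)) * h2P
lemma gP_three : gP 3 = uP * gP 2 + vP * gP 0 := by
  rw [gP_two, gP_zero]
  simp [gP, uP, vP, Finset.sum_range_succ]
  ring_nf
  linear_combination (-(xP ^ 2 * yP) - 2 * (xP * yP ^ 2)) * h2P

lemma p2self (z : P2) : z + z = 0 := by
  rw [← two_smul K2 z, h2K, zero_smul]

lemma key1P (n j : ℕ) (hn : 1 ≤ n) :
    (((n - j).choose (j + 2) : ℕ) : P2)
      = (((n - j - 1).choose (j + 2) : ℕ) : P2) + (((n - j).choose (j + 1) : ℕ) : P2)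
        + (((n - j - 1).choose j : ℕ) : P2) := by
  rw [natCast_P2, natCast_P2, natCast_P2, natCast_P2, key1 n j hn, map_add, map_add]

set_option maxHeartbeats 1600000 in
lemma gP_rec' (n : ℕ) (hn : 1 ≤ n) : gP (n + 3) = uP * gP (n + 2) + vP * gP n := by
  simp only [gP, MvPolynomial.smul_eq_C_mul, ← natCast_P2]
  -- abbreviations as explicit sums
  have e1 : xP * ∑ j ∈ range (n + 2), ((((n + 2) - j - 1).choose j : ℕ) : P2) * (xP ^ ((n + 2) - j) * yP ^ j)
      = ∑ j ∈ range (n + 2), ((((n + 2) - j - 1).choose j : ℕ) : P2) * (xP ^ (n + 3 - j) * yP ^ j) := by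
    rw [Finset.mul_sum]
    refine Finset.sum_congr rfl fun j hj => ?_
    have hj' := Finset.mem_range.mp hj
    rw [show n + 3 - j = (n + 2 - j) + 1 by omega, pow_succ]
    ring
  have e2 : yP * ∑ j ∈ range (n + 2), ((((n + 2) - j - 1).choose j : ℕ) : P2) * (xP ^ ((n + 2) - j) * yP ^ j)
      = ∑ j ∈ range (n + 2), ((((n + 2) - j - 1).choose j : ℕ) : P2) * (xP ^ (n + 2 - j) * yP ^ (j + 1)) := by
    rw [Finset.mul_sum]
    refine Finset.sum_congr rfl fun j hj => ?_
    rw [pow_succ]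
    ring
  have e0 : vP * ∑ j ∈ range n, (((n - j - 1).choose j : ℕ) : P2) * (xP ^ (n - j) * yP ^ j)
      = ∑ j ∈ range n, (((n - j - 1).choose j : ℕ) : P2) * (xP ^ (n + 1 - j) * yP ^ (j + 2)) := by
    rw [vP, Finset.mul_sum]
    refine Finset.sum_congr rfl fun j hj => ?_
    have hj' := Finset.mem_range.mp hj
    rw [show n + 1 - j = (n - j) + 1 by omega, pow_succ, show j + 2 = j + 1 + 1 by omega,
      pow_succ, pow_succ]
    ring
  -- peel j = 0 from the big sum
  have p1 : ∑ j ∈ range (n + 3), ((((n + 3) - j - 1).choose j : ℕ) : P2) * (xP ^ ((n + 3) - j) * yP ^ j)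
      = (∑ j ∈ range (n + 2), (((n + 1 - j).choose (j + 1) : ℕ) : P2) * (xP ^ (n + 2 - j) * yP ^ (j + 1)))
        + xP ^ (n + 3) := by
    rw [Finset.sum_range_succ']
    congr 1
    · refine Finset.sum_congr rfl fun j hj => ?_
      rw [show n + 3 - (j + 1) - 1 = n + 1 - j by omega, show n + 3 - (j + 1) = n + 2 - j by omega]
    · simp
  -- peel j = 0 from x * S2
  have p2 : ∑ j ∈ range (n + 2), ((((n + 2) - j - 1).choose j : ℕ) : P2) * (xP ^ (n + 3 - j) * yP ^ j)
      = (∑ j ∈ range (n + 2), (((n - j).choose (j + 1) : ℕ) : P2) * (xP ^ (n + 2 - j) * yP ^ (j + 1)))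
        + xP ^ (n + 3) := by
    rw [Finset.sum_range_succ']
    congr 1
    · conv_rhs => rw [Finset.sum_range_succ]
      rw [show ((n - (n + 1)).choose (n + 1 + 1) : ℕ) = 0 from
          Nat.choose_eq_zero_of_lt (by omega)]
      push_cast
      rw [zero_mul, add_zero]
      refine Finset.sum_congr rfl fun j hj => ?_
      rw [show n + 1 - j - 1 = n - j by omega]
    · simp
  -- the third family, with truncation artifact at j = 0
  have p0 : ∑ j ∈ range (n + 2), (((n - j).choose (j - 1) : ℕ) : P2) * (xP ^ (n + 2 - j) * yP ^ (j + 1))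
      = (∑ j ∈ range n, (((n - j - 1).choose j : ℕ) : P2) * (xP ^ (n + 1 - j) * yP ^ (j + 2)))
        + xP ^ (n + 2) * yP := by
    rw [Finset.sum_range_succ']
    congr 1
    · rw [Finset.sum_range_succ]
      rw [show ((n - (n + 1)).choose (n + 1 - 1) : ℕ) = 0 by
          rw [show n - (n + 1) = 0 by omega]
          exact Nat.choose_eq_zero_of_lt (by omega)]
      push_cast
      rw [zero_mul, add_zero]
      refine Finset.sum_congr rfl fun j hj => ?_
      rw [show j + 1 + 1 = j + 2 by omega, show n - (j + 1) = n - j - 1 by omega]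
    · simp
  -- merged right-hand side per slot
  have q : (∑ j ∈ range (n + 2), (((n + 1 - j).choose (j + 1) : ℕ) : P2) * (xP ^ (n + 2 - j) * yP ^ (j + 1)))
        + xP ^ (n + 2) * yP
      = ∑ j ∈ range (n + 2),
          ((((n - j).choose (j + 1) : ℕ) : P2) * (xP ^ (n + 2 - j) * yP ^ (j + 1))
            + ((((n + 2) - j - 1).choose j : ℕ) : P2) * (xP ^ (n + 2 - j) * yP ^ (j + 1))
            + (((n - j).choose (j - 1) : ℕ) : P2) * (xP ^ (n + 2 - j) * yP ^ (j + 1))) := by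
    rw [Finset.sum_range_succ'
        (fun j => (((n + 1 - j).choose (j + 1) : ℕ) : P2) * (xP ^ (n + 2 - j) * yP ^ (j + 1))) (n + 1),
      Finset.sum_range_succ'
        (fun j => (((n - j).choose (j + 1) : ℕ) : P2) * (xP ^ (n + 2 - j) * yP ^ (j + 1))
            + ((((n + 2) - j - 1).choose j : ℕ) : P2) * (xP ^ (n + 2 - j) * yP ^ (j + 1))
            + (((n - j).choose (j - 1) : ℕ) : P2) * (xP ^ (n + 2 - j) * yP ^ (j + 1))) (n + 1)]
    have hS : (∑ j ∈ range (n + 1),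
          (((n + 1 - (j + 1)).choose (j + 1 + 1) : ℕ) : P2) * (xP ^ (n + 2 - (j + 1)) * yP ^ (j + 1 + 1)))
        = ∑ j ∈ range (n + 1),
          ((((n - (j + 1)).choose (j + 1 + 1) : ℕ) : P2) * (xP ^ (n + 2 - (j + 1)) * yP ^ (j + 1 + 1))
            + ((((n + 2) - (j + 1) - 1).choose (j + 1) : ℕ) : P2) * (xP ^ (n + 2 - (j + 1)) * yP ^ (j + 1 + 1))
            + (((n - (j + 1)).choose (j + 1 - 1) : ℕ) : P2) * (xP ^ (n + 2 - (j + 1)) * yP ^ (j + 1 + 1))) := by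
      refine Finset.sum_congr rfl fun j hj => ?_
      rw [show n + 1 - (j + 1) = n - j by omega, show j + 1 + 1 = j + 2 by omega,
        show n - (j + 1) = n - j - 1 by omega, show n + 2 - (j + 1) - 1 = n - j by omega,
        show j + 1 - 1 = j by omega, key1P n j hn]
      ring
    rw [hS]
    push_cast [Nat.choose_one_right, Nat.choose_zero_right, Nat.sub_zero]
    ring
  have hsplit : (∑ j ∈ range (n + 2),
          ((((n - j).choose (j + 1) : ℕ) : P2) * (xP ^ (n + 2 - j) * yP ^ (j + 1))
            + ((((n + 2) - j - 1).choose j : ℕ) : P2) * (xP ^ (n + 2 - j) * yP ^ (j + 1))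
            + (((n - j).choose (j - 1) : ℕ) : P2) * (xP ^ (n + 2 - j) * yP ^ (j + 1))))
      = (∑ j ∈ range (n + 2), (((n - j).choose (j + 1) : ℕ) : P2) * (xP ^ (n + 2 - j) * yP ^ (j + 1)))
        + (∑ j ∈ range (n + 2), ((((n + 2) - j - 1).choose j : ℕ) : P2) * (xP ^ (n + 2 - j) * yP ^ (j + 1)))
        + (∑ j ∈ range (n + 2), (((n - j).choose (j - 1) : ℕ) : P2) * (xP ^ (n + 2 - j) * yP ^ (j + 1))) := by
    rw [Finset.sum_add_distrib, Finset.sum_add_distrib]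
  simp only [uP, vP] at e0 ⊢
  linear_combination p1 - e1 - p2 - e2 - e0 + p0 + q + hsplit - (xP * yP ^ (n + 2)) * h2P

lemma gP_rec (n : ℕ) : gP (n + 3) = uP * gP (n + 2) + vP * gP n := by
  rcases n with _ | m
  · exact gP_three
  · exact gP_rec' (m + 1) (by omega)

lemma key2P (p k : ℕ) :
    (((p + 1 - 2 * k).choose (k + 1) : ℕ) : P2)
      = (((p - 2 * k).choose (k + 1) : ℕ) : P2) + (((p - 2 * k).choose k : ℕ) : P2) := by
  rw [natCast_P2, natCast_P2, natCast_P2, key2 p k, map_add]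

lemma chooseP2_zero (a k : ℕ) (h : a < 3 * k) : (((a - 2 * k).choose k : ℕ) : P2) = 0 := by
  rw [Nat.choose_eq_zero_of_lt (by omega)]
  norm_num

lemma L2 : ∀ n, gP n
    = ∑ k ∈ Finset.range (n + 1), ((n - 2 * k).choose k : K2) • (vP ^ k * uP ^ (n - 3 * k)) := by
  intro n
  induction n using Nat.strong_induction_on with
  | _ n ih =>
    obtain _ | (_ | (_ | p)) := n
    · simp [gP_zero]
    · rw [gP_one]
      simp [Finset.sum_range_succ]
    · rw [gP_two]
      simp [Finset.sum_range_succ, Nat.choose]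
    · simp only [MvPolynomial.smul_eq_C_mul, ← natCast_P2] at ih ⊢
      rw [gP_rec p, ih (p + 2) (by omega), ih p (by omega)]
      have hu : uP * ∑ k ∈ range (p + 2 + 1),
            (((p + 2 - 2 * k).choose k : ℕ) : P2) * (vP ^ k * uP ^ (p + 2 - 3 * k))
          = ∑ k ∈ range (p + 3),
            (((p + 2 - 2 * k).choose k : ℕ) : P2) * (vP ^ k * uP ^ (p + 3 - 3 * k)) := by
        rw [Finset.mul_sum]
        refine Finset.sum_congr rfl fun k hk => ?_
        by_cases h3 : 3 * k ≤ p + 2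
        · rw [show p + 3 - 3 * k = (p + 2 - 3 * k) + 1 by omega, pow_succ]
          ring
        · rw [chooseP2_zero _ _ (by omega), zero_mul, zero_mul, mul_zero]
      have hv : vP * ∑ k ∈ range (p + 1),
            (((p - 2 * k).choose k : ℕ) : P2) * (vP ^ k * uP ^ (p - 3 * k))
          = ∑ k ∈ range (p + 1),
            (((p - 2 * k).choose k : ℕ) : P2) * (vP ^ (k + 1) * uP ^ (p - 3 * k)) := by
        rw [Finset.mul_sum]
        refine Finset.sum_congr rfl fun k hk => ?_
        rw [pow_succ]
        ring
      rw [hu, hv]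
      -- peel k = 0 on both sides
      rw [Finset.sum_range_succ'
          (fun k => (((p + 2 - 2 * k).choose k : ℕ) : P2) * (vP ^ k * uP ^ (p + 3 - 3 * k))) (p + 2),
        Finset.sum_range_succ'
          (fun k => (((p + 3 - 2 * k).choose k : ℕ) : P2) * (vP ^ k * uP ^ (p + 3 - 3 * k))) (p + 3)]
      have hpad1 : ∑ k ∈ range (p + 3),
            (((p + 2 - 2 * (k + 1)).choose (k + 1) : ℕ) : P2) * (vP ^ (k + 1) * uP ^ (p + 3 - 3 * (k + 1)))
          = ∑ k ∈ range (p + 2),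
            (((p + 2 - 2 * (k + 1)).choose (k + 1) : ℕ) : P2) * (vP ^ (k + 1) * uP ^ (p + 3 - 3 * (k + 1))) := by
        rw [Finset.sum_range_succ, chooseP2_zero (p + 2) (p + 2 + 1) (by omega), zero_mul, add_zero]
      have hpad2 : ∑ k ∈ range (p + 3),
            (((p - 2 * k).choose k : ℕ) : P2) * (vP ^ (k + 1) * uP ^ (p - 3 * k))
          = ∑ k ∈ range (p + 1),
            (((p - 2 * k).choose k : ℕ) : P2) * (vP ^ (k + 1) * uP ^ (p - 3 * k)) := by
        rw [Finset.sum_range_succ, Finset.sum_range_succ, chooseP2_zero p (p + 2) (by omega),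
          chooseP2_zero p (p + 1) (by omega), zero_mul, zero_mul, add_zero, add_zero]
      have hcomb : ∑ k ∈ range (p + 3),
            ((((p + 2 - 2 * (k + 1)).choose (k + 1) : ℕ) : P2) * (vP ^ (k + 1) * uP ^ (p + 3 - 3 * (k + 1)))
              + (((p - 2 * k).choose k : ℕ) : P2) * (vP ^ (k + 1) * uP ^ (p - 3 * k)))
          = (∑ k ∈ range (p + 3),
              (((p + 2 - 2 * (k + 1)).choose (k + 1) : ℕ) : P2) * (vP ^ (k + 1) * uP ^ (p + 3 - 3 * (k + 1))))
            + ∑ k ∈ range (p + 3),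
              (((p - 2 * k).choose k : ℕ) : P2) * (vP ^ (k + 1) * uP ^ (p - 3 * k)) :=
        Finset.sum_add_distrib
      have hterm : ∑ k ∈ range (p + 3),
            (((p + 3 - 2 * (k + 1)).choose (k + 1) : ℕ) : P2) * (vP ^ (k + 1) * uP ^ (p + 3 - 3 * (k + 1)))
          = ∑ k ∈ range (p + 3),
            ((((p + 2 - 2 * (k + 1)).choose (k + 1) : ℕ) : P2) * (vP ^ (k + 1) * uP ^ (p + 3 - 3 * (k + 1)))
              + (((p - 2 * k).choose k : ℕ) : P2) * (vP ^ (k + 1) * uP ^ (p - 3 * k))) := by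
        refine Finset.sum_congr rfl fun k hk => ?_
        rw [show p + 3 - 3 * (k + 1) = p - 3 * k by omega,
          show p + 3 - 2 * (k + 1) = p + 1 - 2 * k by omega,
          show p + 2 - 2 * (k + 1) = p - 2 * k by omega, key2P p k]
        ring
      simp only [Nat.mul_zero, Nat.sub_zero, Nat.choose_zero_right, Nat.cast_one, one_mul, pow_zero]
      linear_combination -hterm - hcomb - hpad1 - hpad2

lemma A_FA (i n : ℕ) : admRel i n
    = ∑ k ∈ Finset.range (n + 1), ((n - 2 * k).choose k : K2) • symRel (i + k) (n - 3 * k) := by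
  rw [admRel_Phi, L2 n, Finset.sum_mul, map_sum]
  refine Finset.sum_congr rfl fun k hk => ?_
  rw [smul_mul_assoc, map_smul, symRel_Phi]
  congr 2
  simp only [vP]
  ring

lemma adm_mem (i n : ℕ) :
    admRel i n ∈ TwoSidedIdeal.span {x : FA | ∃ m n : ℕ, x = symRel m n} := by
  rw [A_FA]
  refine sum_mem fun k hk => ?_
  rw [Algebra.smul_def]
  exact TwoSidedIdeal.mul_mem_left _ _ _ (TwoSidedIdeal.subset_span ⟨i + k, n - 3 * k, rfl⟩)

lemma sym_mem : ∀ n m : ℕ,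
    symRel m n ∈ TwoSidedIdeal.span {x : FA | ∃ i n : ℕ, x = admRel i n} := by
  intro n
  induction n using Nat.strong_induction_on with
  | _ n ih =>
    intro m
    have h := A_FA m n
    rw [Finset.sum_range_succ'
        (fun k => ((n - 2 * k).choose k : K2) • symRel (m + k) (n - 3 * k)) n] at h
    simp only [Nat.mul_zero, Nat.sub_zero, Nat.choose_zero_right, Nat.cast_one, one_smul,
      Nat.add_zero, add_zero] at h
    have h2 : symRel m n = admRel m n
        - ∑ k ∈ Finset.range n,
            ((n - 2 * (k + 1)).choose (k + 1) : K2) • symRel (m + (k + 1)) (n - 3 * (k + 1)) := by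
      rw [h, add_sub_cancel_left]
    rw [h2]
    refine sub_mem (TwoSidedIdeal.subset_span ⟨m, n, rfl⟩) (sum_mem fun k hk => ?_)
    have hk' := Finset.mem_range.mp hk
    rw [Algebra.smul_def]
    exact TwoSidedIdeal.mul_mem_left _ _ _ (ih (n - 3 * (k + 1)) (by omega) (m + (k + 1)))


/-- The two-sided ideal generated by the symmetric Adem relations equals the two-sided
ideal generated by the admissible Adem relations. -/
theorem symmetric_ideal_eq_admissible_ideal :
    TwoSidedIdeal.span {x : FA | ∃ m n : ℕ, x = symRel m n} =
      TwoSidedIdeal.span {x : FA | ∃ i n : ℕ, x = admRel i n} := by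
  refine SetLike.ext fun x => ⟨fun hx => TwoSidedIdeal.mem_span_iff.mp hx _ ?_,
    fun hx => TwoSidedIdeal.mem_span_iff.mp hx _ ?_⟩
  · rintro z ⟨m, n, rfl⟩
    exact sym_mem n m
  · rintro z ⟨i, n, rfl⟩
    exact adm_mem i n
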